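/- The dihedral angle of a regular tetrahedron, namely arccos(1/3), is an irrational multiple of π; that is, arccos(1/3)/π is irrational. -/
import Mathlib

private def dehnA : ℕ → ℤ
  | 0 => 1
  | 1 => 1
  | (n+2) => 2 * dehnA (n+1) - 9 * dehnA n

private lemma dehnA_not_dvd : ∀ n, ¬ (3 : ℤ) ∣ dehnA (n+1) := by
  intro n
  induction n with
  | zero => decide
  | succ k ih =>
    intro h
    apply ih
    have e : dehnA (k+2) = 2 * dehnA (k+1) - 9 * dehnA k := rfl
    rw [e] at h
    omega

private lemma dehnA_cos : ∀ n : ℕ,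
    Real.cos (n * Real.arccos (1/3)) = dehnA n / 3 ^ n ∧
    Real.cos ((n+1) * Real.arccos (1/3)) = dehnA (n+1) / 3 ^ (n+1) := by
  have hc : Real.cos (Real.arccos (1/3)) = 1/3 :=
    Real.cos_arccos (by norm_num) (by norm_num)
  intro n
  induction n with
  | zero => norm_num [dehnA, hc]
  | succ k ih =>
    obtain ⟨h0, h1⟩ := ih
    set θ := Real.arccos (1/3)
    constructor
    · exact_mod_cast h1
    · have key : Real.cos ((k+2) * θ)
          = 2 * Real.cos ((k+1) * θ) * Real.cos θ - Real.cos (k * θ) := by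
        have e1 : ((k:ℝ)+2) * θ = (k+1)*θ + θ := by ring
        have e2 : (k:ℝ) * θ = (k+1)*θ - θ := by ring
        rw [e1, e2, Real.cos_add, Real.cos_sub]; ring
      have e : ((k+1:ℕ):ℝ) + 1 = (k:ℝ) + 2 := by push_cast; ring
      rw [e, key, h0, h1, hc]
      have hrec : dehnA (k+1+1) = 2 * dehnA (k+1) - 9 * dehnA k := rfl
      rw [hrec]
      push_cast
      field_simp
      ring

theorem arccos_third_div_pi_irrational :
    Irrational (Real.arccos (1/3) / Real.pi) := by
  rw [Irrational]
  intro ⟨r, hr⟩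
  set θ := Real.arccos (1/3) with hθ
  have hπ : Real.pi ≠ 0 := Real.pi_ne_zero
  have hθr : θ = (r : ℝ) * Real.pi := by
    field_simp at hr; linarith [hr]
  have hden : (r.den : ℝ) * θ = (r.num : ℝ) * Real.pi := by
    rw [hθr, show ((r.den : ℝ) * ((r:ℝ) * Real.pi)) = ((r.den : ℝ) * (r:ℝ)) * Real.pi by ring]
    congr 1
    have : ((r.den : ℚ) * r) = (r.num : ℚ) := by rw [mul_comm, Rat.mul_den_eq_num]
    exact_mod_cast congrArg (Rat.cast : ℚ → ℝ) this
  have hcos : Real.cos ((r.den : ℝ) * θ) = dehnA r.den / 3 ^ r.den := (dehnA_cos r.den).1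
  have habs : |Real.cos ((r.num : ℝ) * Real.pi)| = 1 := Real.abs_cos_int_mul_pi r.num
  rw [hden] at hcos
  rw [hcos, abs_div] at habs
  have h3 : |(3:ℝ) ^ r.den| = 3 ^ r.den := abs_of_pos (by positivity)
  rw [h3, div_eq_one_iff_eq (by positivity)] at habs
  have hdpos : r.den ≠ 0 := r.den_nz
  have hint : |dehnA r.den| = 3 ^ r.den := by exact_mod_cast habs
  have hdvd : (3:ℤ) ∣ dehnA r.den := by
    rw [← dvd_abs, hint]
    exact dvd_pow_self 3 hdpos
  have e : r.den - 1 + 1 = r.den := by omega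
  exact dehnA_not_dvd (r.den - 1) (by rwa [e])
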